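/- arXiv:1810.00656 — 2 statements merged into one kernel-verified Lean document; each statement's English description precedes it below -/
import Mathlib

section
/- The propensity score is a balancing score: in the binary treatment setting, the covariates X are conditionally independent of the treatment indicator T given the propensity score e(X) = P(T = 1 | X). Formally, for any value s of e(X) with P(e(X) = s) > 0, P(T = 1 | e(X) = s, X = x) = P(T = 1 | e(X) = s) for every x with e(x) = s and P(X = x, e(X) = s) > 0. -/
open scoped Classical

noncomputable def Pr {Ω : Type*} [Fintype Ω] (μ : Ω → ℝ) (A : Ω → Prop) : ℝ :=
  ∑ ω, if A ω then μ ω else 0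

/-- Conditional probability P(A | B). -/
noncomputable def CondPr {Ω : Type*} [Fintype Ω] (μ : Ω → ℝ) (A B : Ω → Prop) : ℝ :=
  Pr μ (fun ω => A ω ∧ B ω) / Pr μ B

lemma Pr_congr {Ω : Type*} [Fintype Ω] (μ : Ω → ℝ) {A B : Ω → Prop}
    (h : ∀ ω, A ω ↔ B ω) : Pr μ A = Pr μ B := by
  unfold Pr; exact Finset.sum_congr rfl fun ω _ => by simp [h ω]

lemma Pr_nonneg {Ω : Type*} [Fintype Ω] {μ : Ω → ℝ} (hμ : ∀ ω, 0 ≤ μ ω)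
    (A : Ω → Prop) : 0 ≤ Pr μ A :=
  Finset.sum_nonneg fun ω _ => by split <;> simp [hμ ω]

lemma Pr_mono {Ω : Type*} [Fintype Ω] {μ : Ω → ℝ} (hμ : ∀ ω, 0 ≤ μ ω)
    {A B : Ω → Prop} (h : ∀ ω, A ω → B ω) : Pr μ A ≤ Pr μ B := by
  apply Finset.sum_le_sum; intro ω _
  by_cases hA : A ω <;> by_cases hB : B ω <;> simp_all [hμ ω]

lemma Pr_fiber {Ω 𝒳 : Type*} [Fintype Ω] [Fintype 𝒳] (μ : Ω → ℝ)
    (Q : Ω → Prop) (X : Ω → 𝒳) :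
    Pr μ Q = ∑ x' : 𝒳, Pr μ (fun ω => Q ω ∧ X ω = x') := by
  unfold Pr
  rw [Finset.sum_comm]
  refine Finset.sum_congr rfl fun ω _ => ?_
  by_cases hQ : Q ω <;> simp [hQ]

theorem stmt_1 {Ω 𝒳 : Type*} [Fintype Ω] [Fintype 𝒳]
    (μ : Ω → ℝ) (hμ : ∀ ω, 0 ≤ μ ω) (hμ1 : ∑ ω, μ ω = 1)
    (X : Ω → 𝒳) (T : Ω → Bool)
    (e : 𝒳 → ℝ)
    -- e is the propensity score: e(x) = P(T = 1 | X = x) on the support of X.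
    (he : ∀ x : 𝒳, 0 < Pr μ (fun ω => X ω = x) →
      e x = CondPr μ (fun ω => T ω = true) (fun ω => X ω = x)) :
    ∀ s : ℝ, 0 < Pr μ (fun ω => e (X ω) = s) →
      ∀ x : 𝒳, e x = s → 0 < Pr μ (fun ω => X ω = x ∧ e (X ω) = s) →
        CondPr μ (fun ω => T ω = true) (fun ω => X ω = x ∧ e (X ω) = s)
          = CondPr μ (fun ω => T ω = true) (fun ω => e (X ω) = s) := by
  intro s hs x hex hxs
  -- per-fiber identity
  have hterm : ∀ x' : 𝒳,
      Pr μ (fun ω => (T ω = true ∧ e (X ω) = s) ∧ X ω = x')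
        = s * Pr μ (fun ω => e (X ω) = s ∧ X ω = x') := by
    intro x'
    by_cases hx : e x' = s
    · have hA : ∀ ω, ((T ω = true ∧ e (X ω) = s) ∧ X ω = x') ↔ (T ω = true ∧ X ω = x') := by
        intro ω
        constructor
        · rintro ⟨⟨h1, _⟩, h3⟩; exact ⟨h1, h3⟩
        · rintro ⟨h1, h3⟩; exact ⟨⟨h1, by rw [h3, hx]⟩, h3⟩
      have hB : ∀ ω, (e (X ω) = s ∧ X ω = x') ↔ X ω = x' := by
        intro ω
        constructor
        · rintro ⟨_, h3⟩; exact h3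
        · intro h3; exact ⟨by rw [h3, hx], h3⟩
      rw [Pr_congr μ hA, Pr_congr μ hB]
      by_cases hp : 0 < Pr μ (fun ω => X ω = x')
      · have h1 := he x' hp
        rw [hx] at h1
        unfold CondPr at h1
        rw [eq_div_iff hp.ne'] at h1
        exact h1.symm
      · have h0 : Pr μ (fun ω => X ω = x') = 0 :=
          le_antisymm (not_lt.mp hp) (Pr_nonneg hμ _)
        have hle : Pr μ (fun ω => T ω = true ∧ X ω = x') ≤ 0 := by
          rw [← h0]; exact Pr_mono hμ fun ω h => h.2
        have : Pr μ (fun ω => T ω = true ∧ X ω = x') = 0 :=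
          le_antisymm hle (Pr_nonneg hμ _)
        rw [this, h0, mul_zero]
    · have hA : ∀ ω, ((T ω = true ∧ e (X ω) = s) ∧ X ω = x') ↔ False := by
        intro ω
        simp only [iff_false]
        rintro ⟨⟨_, h2⟩, h3⟩; exact hx (h3 ▸ h2)
      have hB : ∀ ω, (e (X ω) = s ∧ X ω = x') ↔ False := by
        intro ω
        simp only [iff_false]
        rintro ⟨h2, h3⟩; exact hx (h3 ▸ h2)
      rw [Pr_congr μ hA, Pr_congr μ hB]
      simp [Pr]
  -- RHS = s
  have hRHS : CondPr μ (fun ω => T ω = true) (fun ω => e (X ω) = s) = s := by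
    unfold CondPr
    have hnum : Pr μ (fun ω => T ω = true ∧ e (X ω) = s)
        = s * Pr μ (fun ω => e (X ω) = s) := by
      rw [Pr_fiber μ (fun ω => T ω = true ∧ e (X ω) = s) X,
          Pr_fiber μ (fun ω => e (X ω) = s) X, Finset.mul_sum]
      exact Finset.sum_congr rfl fun x' _ => hterm x'
    rw [hnum, mul_div_assoc, div_self hs.ne', mul_one]
  -- LHS = s
  have hEv : ∀ ω, (X ω = x ∧ e (X ω) = s) ↔ X ω = x := by
    intro ω
    constructor
    · rintro ⟨h1, _⟩; exact h1
    · intro h1; exact ⟨h1, by rw [h1, hex]⟩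
  have hEvT : ∀ ω, (T ω = true ∧ (X ω = x ∧ e (X ω) = s)) ↔ (T ω = true ∧ X ω = x) := by
    intro ω; rw [hEv ω]
  have hpx : 0 < Pr μ (fun ω => X ω = x) := by
    rwa [Pr_congr μ hEv] at hxs
  have hLHS : CondPr μ (fun ω => T ω = true) (fun ω => X ω = x ∧ e (X ω) = s) = s := by
    unfold CondPr
    rw [Pr_congr μ hEvT, Pr_congr μ hEv]
    have h1 := he x hpx
    rw [hex] at h1
    unfold CondPr at h1
    exact h1.symm
  rw [hLHS, hRHS]
end

section
/- Law of total expectation over propensity strata: under unconfoundedness given a balancing score b with finitely many values, the average treatment effect for binary treatments satisfies E[Y(1) − Y(0)] = Σ_s P(b(X) = s) · (E[Y(T) | T = 1, b(X) = s] − E[Y(T) | T = 0, b(X) = s]), where the sum is over strata s with positive probability and overlap holds within each stratum. -/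
open scoped Classical

noncomputable def CE {Ω : Type*} [Fintype Ω] (μ : Ω → ℝ) (f : Ω → ℝ) (A : Ω → Prop) : ℝ :=
  (∑ ω, if A ω then f ω * μ ω else 0) / Pr μ A

theorem stmt_17 {Ω 𝒳 ℬ : Type*} [Fintype Ω] [Fintype 𝒳] [Fintype ℬ]
    (μ : Ω → ℝ) (hμ : ∀ ω, 0 ≤ μ ω) (hμ1 : ∑ ω, μ ω = 1)
    (X : Ω → 𝒳) (T : Ω → Bool) (Y : Bool → Ω → ℝ) (b : 𝒳 → ℬ)
    -- Unconfoundedness given the balancing score: Y(t) ⟂ T | b(X) for each t.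
    (hU : ∀ (t : Bool) (y : ℝ) (s : ℬ), 0 < Pr μ (fun ω => b (X ω) = s) →
      CondPr μ (fun ω => Y t ω = y ∧ T ω = t) (fun ω => b (X ω) = s)
        = CondPr μ (fun ω => Y t ω = y) (fun ω => b (X ω) = s)
          * CondPr μ (fun ω => T ω = t) (fun ω => b (X ω) = s))
    -- Overlap within every stratum of positive probability
    (hO : ∀ (t : Bool) (s : ℬ), 0 < Pr μ (fun ω => b (X ω) = s) →
      0 < Pr μ (fun ω => T ω = t ∧ b (X ω) = s)) :
    ∑ ω, (Y true ω - Y false ω) * μ ω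
      = ∑ s ∈ Finset.univ.filter (fun s : ℬ => 0 < Pr μ (fun ω => b (X ω) = s)),
          Pr μ (fun ω => b (X ω) = s) *
            (CE μ (fun ω => Y (T ω) ω) (fun ω => T ω = true ∧ b (X ω) = s)
              - CE μ (fun ω => Y (T ω) ω) (fun ω => T ω = false ∧ b (X ω) = s)) := by
  classical
  -- basic facts
  have prnn : ∀ A : Ω → Prop, 0 ≤ Pr μ A := by
    intro A
    apply Finset.sum_nonneg
    intro ω _
    split <;> simp [hμ ω]
  have muzero : ∀ (A : Ω → Prop), Pr μ A = 0 → ∀ ω, A ω → μ ω = 0 := by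
    intro A hA ω hω
    have h := (Finset.sum_eq_zero_iff_of_nonneg
      (fun ω _ => by split <;> simp [hμ ω])).1 hA ω (Finset.mem_univ ω)
    simpa [hω] using h
  have prcongr : ∀ (A B : Ω → Prop), (∀ ω, A ω ↔ B ω) → Pr μ A = Pr μ B := by
    intro A B h
    unfold Pr
    apply Finset.sum_congr rfl
    intro ω _
    simp [h ω]
  -- expansion over values
  have expand : ∀ (g : Ω → ℝ) (E : Ω → Prop),
      (∑ ω, if E ω then g ω * μ ω else 0)
        = ∑ y ∈ Finset.univ.image g, y * Pr μ (fun ω => g ω = y ∧ E ω) := by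
    intro g E
    unfold Pr
    simp_rw [Finset.mul_sum]
    conv_rhs => rw [Finset.sum_comm]
    apply Finset.sum_congr rfl
    intro ω _
    by_cases hE : E ω
    · simp [hE, mul_ite, Finset.sum_ite_eq, Finset.mem_image_of_mem g (Finset.mem_univ ω)]
    · simp [hE]
  -- key stratum identity
  have key : ∀ (t : Bool) (s : ℬ), 0 < Pr μ (fun ω => b (X ω) = s) →
      Pr μ (fun ω => b (X ω) = s)
        * CE μ (fun ω => Y (T ω) ω) (fun ω => T ω = t ∧ b (X ω) = s)
      = ∑ ω, if b (X ω) = s then Y t ω * μ ω else 0 := by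
    intro t s hs
    have hTs := hO t s hs
    have hCEeq : CE μ (fun ω => Y (T ω) ω) (fun ω => T ω = t ∧ b (X ω) = s)
        = CE μ (Y t) (fun ω => T ω = t ∧ b (X ω) = s) := by
      unfold CE
      congr 1
      apply Finset.sum_congr rfl
      intro ω _
      split_ifs with h
      · show Y (T ω) ω * μ ω = Y t ω * μ ω
        rw [h.1]
      · rfl
    rw [hCEeq]
    unfold CE
    rw [mul_div_assoc', div_eq_iff (ne_of_gt hTs)]
    simp only [expand (Y t) (fun ω => T ω = t ∧ b (X ω) = s),
      expand (Y t) (fun ω => b (X ω) = s)]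
    rw [Finset.mul_sum, Finset.sum_mul]
    apply Finset.sum_congr rfl
    intro y _
    have h := hU t y s hs
    unfold CondPr at h
    have hP0 : Pr μ (fun ω => b (X ω) = s) ≠ 0 := ne_of_gt hs
    have h2 : Pr μ (fun ω => (Y t ω = y ∧ T ω = t) ∧ b (X ω) = s)
          * Pr μ (fun ω => b (X ω) = s)
        = Pr μ (fun ω => Y t ω = y ∧ b (X ω) = s)
          * Pr μ (fun ω => T ω = t ∧ b (X ω) = s) := by
      field_simp at h
      apply mul_right_cancel₀ hP0
      linear_combination (Pr μ (fun ω => b (X ω) = s)) * h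
    have h3 : Pr μ (fun ω => Y t ω = y ∧ T ω = t ∧ b (X ω) = s)
        = Pr μ (fun ω => (Y t ω = y ∧ T ω = t) ∧ b (X ω) = s) :=
      prcongr _ _ (fun ω => by tauto)
    rw [h3]
    linear_combination y * h2
  -- partition over strata
  have partition : ∀ t : Bool,
      (∑ s ∈ Finset.univ.filter (fun s : ℬ => 0 < Pr μ (fun ω => b (X ω) = s)),
        ∑ ω, if b (X ω) = s then Y t ω * μ ω else 0)
      = ∑ ω, Y t ω * μ ω := by
    intro t
    rw [Finset.sum_filter_of_ne]
    · rw [Finset.sum_comm]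
      apply Finset.sum_congr rfl
      intro ω _
      rw [Finset.sum_ite_eq Finset.univ (b (X ω)) (fun _ => Y t ω * μ ω),
        if_pos (Finset.mem_univ _)]
    · intro s _ hne
      rcases lt_or_eq_of_le (prnn (fun ω => b (X ω) = s)) with h | h
      · exact h
      · exfalso
        apply hne
        apply Finset.sum_eq_zero
        intro ω _
        split_ifs with hb
        · rw [muzero _ h.symm ω hb, mul_zero]
        · rfl
  -- assemble
  have hL : ∑ ω, (Y true ω - Y false ω) * μ ω
      = (∑ ω, Y true ω * μ ω) - ∑ ω, Y false ω * μ ω := by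
    rw [← Finset.sum_sub_distrib]
    apply Finset.sum_congr rfl
    intro ω _
    ring
  rw [hL, ← partition true, ← partition false, ← Finset.sum_sub_distrib]
  apply Finset.sum_congr rfl
  intro s hs
  have hs' : 0 < Pr μ (fun ω => b (X ω) = s) := (Finset.mem_filter.1 hs).2
  rw [mul_sub, key true s hs', key false s hs']
end
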